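/- Let λ > 0 and let {f_i}_{i∈I} be a λ-tight frame for a Hilbert space H. Then for every subset J ⊆ I and every f ∈ H: λ·∑_{i∈J} |⟨f, f_i⟩|² − ‖∑_{i∈J} ⟨f, f_i⟩ f_i‖² = λ·∑_{i∈J^c} |⟨f, f_i⟩|² − ‖∑_{i∈J^c} ⟨f, f_i⟩ f_i‖², where J^c = I \ J. -/

import Mathlib

open scoped InnerProductSpace

section AuxFrame

variable {H : Type*} [NormedAddCommGroup H] [InnerProductSpace ℂ H] [CompleteSpace H]
variable {ι : Type*}

/-- Bessel-type bound on finite partial sums. -/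
lemma aux_finset_bound (f : ι → H) (lam : ℝ) (hlam : 0 ≤ lam)
    (hT : ∀ x : H, HasSum (fun i => ‖⟪f i, x⟫_ℂ‖ ^ 2) (lam * ‖x‖ ^ 2))
    (c : ι → ℂ) (F : Finset ι) :
    ‖∑ i ∈ F, c i • f i‖ ^ 2 ≤ lam * ∑ i ∈ F, ‖c i‖ ^ 2 := by
  set y : H := ∑ i ∈ F, c i • f i with hy
  have h2 : ⟪y, y⟫_ℂ = ∑ i ∈ F, (starRingEnd ℂ) (c i) * ⟪f i, y⟫_ℂ := by
    rw [hy, sum_inner]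
    exact Finset.sum_congr rfl fun i _ => by rw [inner_smul_left]
  have h1 : (‖y‖ : ℝ) ^ 2 ≤ ∑ i ∈ F, ‖c i‖ * ‖⟪f i, y⟫_ℂ‖ := by
    calc (‖y‖ : ℝ) ^ 2 = RCLike.re ⟪y, y⟫_ℂ := (inner_self_eq_norm_sq (𝕜 := ℂ) y).symm
      _ ≤ ‖⟪y, y⟫_ℂ‖ := RCLike.re_le_norm _
      _ ≤ ∑ i ∈ F, ‖(starRingEnd ℂ) (c i) * ⟪f i, y⟫_ℂ‖ := by
          rw [h2]; exact norm_sum_le _ _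
      _ = ∑ i ∈ F, ‖c i‖ * ‖⟪f i, y⟫_ℂ‖ := by
          exact Finset.sum_congr rfl fun i _ => by rw [norm_mul, RCLike.norm_conj]
  have hcs : (∑ i ∈ F, ‖c i‖ * ‖⟪f i, y⟫_ℂ‖) ^ 2 ≤
      (∑ i ∈ F, ‖c i‖ ^ 2) * ∑ i ∈ F, ‖⟪f i, y⟫_ℂ‖ ^ 2 :=
    Finset.sum_mul_sq_le_sq_mul_sq F _ _
  have hbes : ∑ i ∈ F, ‖⟪f i, y⟫_ℂ‖ ^ 2 ≤ lam * ‖y‖ ^ 2 :=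
    sum_le_hasSum F (fun i _ => by positivity) (hT y)
  have hSnn : (0:ℝ) ≤ ∑ i ∈ F, ‖c i‖ ^ 2 := Finset.sum_nonneg fun i _ => by positivity
  have hynn : (0:ℝ) ≤ ‖y‖ := norm_nonneg y
  have he2 : (‖y‖ ^ 2) ^ 2 ≤ (∑ i ∈ F, ‖c i‖ * ‖⟪f i, y⟫_ℂ‖) ^ 2 :=
    pow_le_pow_left₀ (sq_nonneg _) h1 2
  have hchain : (‖y‖ ^ 2) ^ 2 ≤ (∑ i ∈ F, ‖c i‖ ^ 2) * (lam * ‖y‖ ^ 2) :=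
    he2.trans (hcs.trans (mul_le_mul_of_nonneg_left hbes hSnn))
  nlinarith [sq_nonneg ‖y‖, mul_nonneg hlam hSnn]

lemma aux_summable (f : ι → H) (lam : ℝ) (hlam : 0 ≤ lam)
    (hT : ∀ x : H, HasSum (fun i => ‖⟪f i, x⟫_ℂ‖ ^ 2) (lam * ‖x‖ ^ 2))
    (x : H) : Summable (fun i => ⟪f i, x⟫_ℂ • f i) := by
  rw [summable_iff_vanishing_norm]
  intro ε hε
  have hc : Summable (fun i => ‖⟪f i, x⟫_ℂ‖ ^ 2) := (hT x).summable
  obtain ⟨s, hs⟩ := summable_iff_vanishing_norm.mp hc (ε ^ 2 / (lam + 1)) (by positivity)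
  refine ⟨s, fun t ht => ?_⟩
  have h1 := aux_finset_bound f lam hlam hT (fun i => ⟪f i, x⟫_ℂ) t
  have h2 := hs t ht
  have h3 : ∑ i ∈ t, ‖⟪f i, x⟫_ℂ‖ ^ 2 < ε ^ 2 / (lam + 1) := by
    have : |∑ i ∈ t, ‖⟪f i, x⟫_ℂ‖ ^ 2| < ε ^ 2 / (lam + 1) := by
      simpa [Real.norm_eq_abs] using h2
    exact lt_of_le_of_lt (le_abs_self _) this
  have hnn : (0:ℝ) ≤ ‖∑ i ∈ t, ⟪f i, x⟫_ℂ • f i‖ := norm_nonneg _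
  have hl1 : (0:ℝ) < lam + 1 := by linarith
  have h5 : lam * (ε ^ 2 / (lam + 1)) < ε ^ 2 := by
    rw [mul_div_assoc', div_lt_iff₀ hl1]
    nlinarith [pow_pos hε 2]
  have key : ‖∑ i ∈ t, ⟪f i, x⟫_ℂ • f i‖ ^ 2 < ε ^ 2 := by
    calc ‖∑ i ∈ t, ⟪f i, x⟫_ℂ • f i‖ ^ 2 ≤ lam * ∑ i ∈ t, ‖⟪f i, x⟫_ℂ‖ ^ 2 := h1
      _ ≤ lam * (ε ^ 2 / (lam + 1)) := mul_le_mul_of_nonneg_left h3.le hlam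
      _ < ε ^ 2 := h5
  nlinarith

lemma aux_inner_tsum (f : ι → H) (c : ι → ℂ) (y : H) {A : H}
    (hA : HasSum (fun i => c i • f i) A) :
    HasSum (fun i => c i * ⟪y, f i⟫_ℂ) ⟪y, A⟫_ℂ := by
  have := hA.mapL (innerSL ℂ y)
  simpa [inner_smul_right] using this

/-- The frame operator of a tight frame is `lam • id`. -/
lemma aux_frame_op (f : ι → H) (lam : ℝ) (hlam : 0 ≤ lam)
    (hT : ∀ x : H, HasSum (fun i => ‖⟪f i, x⟫_ℂ‖ ^ 2) (lam * ‖x‖ ^ 2))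
    (x : H) : HasSum (fun i => ⟪f i, x⟫_ℂ • f i) ((lam : ℂ) • x) := by
  have hsumm : ∀ y : H, Summable (fun i => ⟪f i, y⟫_ℂ • f i) := aux_summable f lam hlam hT
  set T : H →ₗ[ℂ] H :=
    { toFun := fun y => (∑' i, ⟪f i, y⟫_ℂ • f i) - (lam : ℂ) • y
      map_add' := by
        intro a b
        have h1 : ∑' i, ⟪f i, a + b⟫_ℂ • f i
            = (∑' i, ⟪f i, a⟫_ℂ • f i) + ∑' i, ⟪f i, b⟫_ℂ • f i := by
          rw [← Summable.tsum_add (hsumm a) (hsumm b)]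
          congr 1; funext i
          rw [inner_add_right, add_smul]
        rw [h1, smul_add]; abel
      map_smul' := by
        intro m a
        have h1 : ∑' i, ⟪f i, m • a⟫_ℂ • f i = m • ∑' i, ⟪f i, a⟫_ℂ • f i := by
          have he : (fun i => ⟪f i, m • a⟫_ℂ • f i) = fun i => m • (⟪f i, a⟫_ℂ • f i) :=
            funext fun i => by rw [inner_smul_right, mul_smul]
          rw [he, Summable.tsum_const_smul m (hsumm a)]
        simp only [RingHom.id_apply, h1, smul_sub]
        congr 1
        rw [smul_comm] } with hTdef
  have hzero : ∀ y : H, ⟪T y, y⟫_ℂ = 0 := by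
    intro y
    have hinner : ⟪y, ∑' i, ⟪f i, y⟫_ℂ • f i⟫_ℂ = ((lam * ‖y‖ ^ 2 : ℝ) : ℂ) := by
      have h1 := aux_inner_tsum f (fun i => ⟪f i, y⟫_ℂ) y (hsumm y).hasSum
      have h2 : HasSum (fun i => ((‖⟪f i, y⟫_ℂ‖ ^ 2 : ℝ) : ℂ)) ((lam * ‖y‖ ^ 2 : ℝ) : ℂ) :=
        (hT y).mapL Complex.ofRealCLM
      have h3 : (fun i => ⟪f i, y⟫_ℂ * ⟪y, f i⟫_ℂ) = fun i => ((‖⟪f i, y⟫_ℂ‖ ^ 2 : ℝ) : ℂ) := by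
        funext i
        rw [← inner_conj_symm y (f i)]
        rw [mul_comm, RCLike.conj_mul]
        norm_cast
      rw [h3] at h1
      exact h1.unique h2
    have hTy : ⟪y, T y⟫_ℂ = 0 := by
      simp only [hTdef, LinearMap.coe_mk, AddHom.coe_mk, inner_sub_right, inner_smul_right,
        hinner]
      rw [inner_self_eq_norm_sq_to_K (𝕜 := ℂ) y]
      push_cast
      ring_nf
      simp [RCLike.ofReal_alg]
    rw [← inner_conj_symm, hTy, map_zero]
  have hT0 : T = 0 := (inner_map_self_eq_zero T).mp hzero
  have : (∑' i, ⟪f i, x⟫_ℂ • f i) - (lam : ℂ) • x = 0 := by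
    have := congrFun (congrArg (fun g => g.toFun) hT0) x
    exact this
  have htsum : ∑' i, ⟪f i, x⟫_ℂ • f i = (lam : ℂ) • x := by
    rwa [sub_eq_zero] at this
  rw [← htsum]
  exact (hsumm x).hasSum

end AuxFrame

/-- The identity for λ-tight frames: for a λ-tight frame `{f_i}`, any `J ⊆ I` and any `x`:
`λ∑_{i∈J} |⟨x,f_i⟩|² − ‖∑_{i∈J} ⟨x,f_i⟩ f_i‖² = λ∑_{i∈J^c} |⟨x,f_i⟩|² − ‖∑_{i∈J^c} ⟨x,f_i⟩ f_i‖²`. -/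
theorem stmt_7 {H : Type*} [NormedAddCommGroup H] [InnerProductSpace ℂ H] [CompleteSpace H]
    {ι : Type*} (f : ι → H) (lam : ℝ) (hlam : 0 < lam)
    (hT : ∀ x : H, HasSum (fun i => ‖⟪f i, x⟫_ℂ‖ ^ 2) (lam * ‖x‖ ^ 2))
    (J : Set ι) (x : H) :
    lam * (∑' i : J, ‖⟪f i, x⟫_ℂ‖ ^ 2) - ‖∑' i : J, ⟪f i, x⟫_ℂ • (f i : H)‖ ^ 2 =
    lam * (∑' i : ↥Jᶜ, ‖⟪f i, x⟫_ℂ‖ ^ 2) - ‖∑' i : ↥Jᶜ, ⟪f i, x⟫_ℂ • (f i : H)‖ ^ 2 := by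
  have hsumm : Summable (fun i => ⟪f i, x⟫_ℂ • f i) := aux_summable f lam hlam.le hT x
  have hcsumm : Summable (fun i => ‖⟪f i, x⟫_ℂ‖ ^ 2) := (hT x).summable
  have hsJ : Summable ((fun i => ⟪f i, x⟫_ℂ • f i) ∘ ((↑) : J → ι)) := hsumm.subtype J
  have hsJc : Summable ((fun i => ⟪f i, x⟫_ℂ • f i) ∘ ((↑) : ↥Jᶜ → ι)) := hsumm.subtype Jᶜ
  set A : H := ∑' i : J, ⟪f i, x⟫_ℂ • f i with hAdef
  set B : H := ∑' i : ↥Jᶜ, ⟪f i, x⟫_ℂ • f i with hBdef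
  have hA : HasSum (fun i : J => ⟪f (i : ι), x⟫_ℂ • f (i : ι)) A := hsJ.hasSum
  have hB : HasSum (fun i : ↥Jᶜ => ⟪f (i : ι), x⟫_ℂ • f (i : ι)) B := hsJc.hasSum
  have hAB : A + B = (lam : ℂ) • x := by
    rw [hAdef, hBdef]
    rw [Summable.tsum_add_tsum_compl hsJ hsJc]
    exact (aux_frame_op f lam hlam.le hT x).tsum_eq
  -- inner products with x
  set a : ℝ := ∑' i : J, ‖⟪f i, x⟫_ℂ‖ ^ 2 with hadef
  set b : ℝ := ∑' i : ↥Jᶜ, ‖⟪f i, x⟫_ℂ‖ ^ 2 with hbdef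
  have hinner : ∀ {s : Set ι} {C : H}
      (_ : HasSum (fun i : s => ⟪f (i : ι), x⟫_ℂ • f (i : ι)) C),
      ⟪x, C⟫_ℂ = ((∑' i : s, ‖⟪f (i : ι), x⟫_ℂ‖ ^ 2 : ℝ) : ℂ) := by
    intro s C hC
    have h1 := aux_inner_tsum (fun i : s => f (i : ι)) (fun i : s => ⟪f (i : ι), x⟫_ℂ) x hC
    have h3 : (fun i : s => ⟪f (i : ι), x⟫_ℂ * ⟪x, f (i : ι)⟫_ℂ)
        = fun i : s => ((‖⟪f (i : ι), x⟫_ℂ‖ ^ 2 : ℝ) : ℂ) := by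
      funext i
      rw [← inner_conj_symm x (f (i : ι)), mul_comm, RCLike.conj_mul]
      norm_cast
    rw [h3] at h1
    have h2 : HasSum (fun i : s => ((‖⟪f (i : ι), x⟫_ℂ‖ ^ 2 : ℝ) : ℂ))
        (((∑' i : s, ‖⟪f (i : ι), x⟫_ℂ‖ ^ 2 : ℝ)) : ℂ) :=
      ((hcsumm.subtype s).hasSum).mapL Complex.ofRealCLM
    exact h1.unique h2
  have hxA : ⟪x, A⟫_ℂ = (a : ℂ) := hinner hA
  have hxB : ⟪x, B⟫_ℂ = (b : ℂ) := hinner hB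
  -- ‖A‖² = lam * a - re⟪A,B⟫ and ‖B‖² = lam * b - re⟪A,B⟫
  have hAx : ⟪A, x⟫_ℂ = (a : ℂ) := by
    rw [← inner_conj_symm, hxA]; simp
  have hBx : ⟪B, x⟫_ℂ = (b : ℂ) := by
    rw [← inner_conj_symm, hxB]; simp
  have hnA : (‖A‖ : ℝ) ^ 2 = lam * a - (⟪A, B⟫_ℂ).re := by
    have h1 : ⟪A, A⟫_ℂ = ⟪A, (lam : ℂ) • x⟫_ℂ - ⟪A, B⟫_ℂ := by
      rw [← hAB, inner_add_right]; ring
    have h2 : ⟪A, (lam : ℂ) • x⟫_ℂ = (lam : ℂ) * (a : ℂ) := by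
      rw [inner_smul_right, hAx]
    have h3 : (⟪A, A⟫_ℂ).re = ‖A‖ ^ 2 := by
      rw [inner_self_eq_norm_sq_to_K (𝕜 := ℂ) A]
      norm_cast
    rw [← h3, h1, h2]
    simp [Complex.sub_re, Complex.mul_re]
  have hnB : (‖B‖ : ℝ) ^ 2 = lam * b - (⟪A, B⟫_ℂ).re := by
    have h1 : ⟪B, B⟫_ℂ = ⟪(lam : ℂ) • x, B⟫_ℂ - ⟪A, B⟫_ℂ := by
      rw [← hAB, inner_add_left]; ring
    have h2 : ⟪(lam : ℂ) • x, B⟫_ℂ = (lam : ℂ) * (b : ℂ) := by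
      rw [inner_smul_left, hxB]
      simp
    have h3 : (⟪B, B⟫_ℂ).re = ‖B‖ ^ 2 := by
      rw [inner_self_eq_norm_sq_to_K (𝕜 := ℂ) B]
      norm_cast
    rw [← h3, h1, h2]
    simp [Complex.sub_re, Complex.mul_re]
  rw [hnA, hnB]
  ring
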